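/- There exist a flow network G=(V,E) with nodes s,t and lifted graph G'=(V',E') as above, and a pair (y,y') ∈ [0,1]^E × [0,1]^{E'} that satisfies all lifted multicut path inequalities but violates some path inequality. Hence the path inequalities define a strictly tighter relaxation than the lifted multicut path inequalities. -/

import Mathlib

open Finset
open scoped Classical

section LiftedDisjointPaths

variable {V : Type*} [Fintype V] [DecidableEq V]

/-- A `vw`-path in the digraph with edge set `E`, given by its (nonempty) list of vertices:
it starts at `v`, ends at `w`, and consecutive vertices are joined by edges of `E`. -/
def IsPath (E : Finset (V × V)) (v w : V) (p : List V) : Prop :=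
  p ≠ [] ∧ p.head? = some v ∧ p.getLast? = some w ∧ p.Chain' (fun a b => (a, b) ∈ E)

/-- The edge list `P_E` of a path given by its vertex list. -/
def pEdges (p : List V) : List (V × V) := p.zip p.tail

/-- The reachability relation `R`: `vw ∈ R` iff `v = w` or there is a `vw`-path in `G`. -/
def Reach (E : Finset (V × V)) (v w : V) : Prop :=
  v = w ∨ ∃ p, IsPath E v w p

/-- `G = (V,E)` is a flow network with source `s` and sink `t`: it is acyclic, every node is
reachable from `s`, and `t` is reachable from every node. -/
structure IsFlowNetwork (E : Finset (V × V)) (s t : V) : Prop where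
  acyclic : ∀ v w : V, (v, w) ∈ E → ¬ Reach E w v
  reach_from_source : ∀ v : V, Reach E s v
  reach_to_sink : ∀ v : V, Reach E v t

/-- The lifted graph `G' = (V', E')` has node set `V' = V ∖ {s,t}`. -/
def IsLiftedGraph (E' : Finset (V × V)) (s t : V) : Prop :=
  ∀ e ∈ E', e.1 ≠ s ∧ e.1 ≠ t ∧ e.2 ≠ s ∧ e.2 ≠ t

/-- `y ∈ [0,1]^E`. -/
def InUnitBox (E : Finset (V × V)) (y : V × V → ℝ) : Prop :=
  ∀ e ∈ E, 0 ≤ y e ∧ y e ≤ 1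

/-! ### Paths in the multigraph `G ∪ G'` -/

/-- Vertex list `P_V` of a path in `G ∪ G'` starting at `v`; each step of `q` records the next
vertex together with a flag saying whether the edge used is a lifted edge. -/
def mVerts (v : V) (q : List (V × Bool)) : List V := v :: q.map Prod.fst

/-- The labelled edge list of a path in `G ∪ G'`. -/
def mEdges (v : V) (q : List (V × Bool)) : List ((V × V) × Bool) :=
  List.zipWith (fun a ub => ((a, ub.1), ub.2)) (mVerts v q) q

/-- `P_E`: the set of base edges of a path in `G ∪ G'`. -/
def mBase (v : V) (q : List (V × Bool)) : Finset (V × V) :=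
  ((mEdges v q).filterMap fun eb => if eb.2 then none else some eb.1).toFinset

/-- `P_{E'}`: the set of lifted edges of a path in `G ∪ G'`. -/
def mLifted (v : V) (q : List (V × Bool)) : Finset (V × V) :=
  ((mEdges v q).filterMap fun eb => if eb.2 then some eb.1 else none).toFinset

/-- A `vw`-path in the multigraph `G ∪ G'`: it starts at `v`, ends at `w`, each base step uses
an edge of `E`, each lifted step uses an edge of `E'`, and the sets of base and lifted edges
used are disjoint. -/
def IsMPath (E E' : Finset (V × V)) (v w : V) (q : List (V × Bool)) : Prop :=
  (mVerts v q).getLast? = some w ∧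
  (∀ eb ∈ mEdges v q, if eb.2 then eb.1 ∈ E' else eb.1 ∈ E) ∧
  Disjoint (mBase v q) (mLifted v q)

/-! ### The families of linear inequalities -/

/-- All path inequalities: for every lifted edge `vw ∈ E'` and every `vw`-path `P` in `G`,
`y'_{vw} ≥ Σ_{j ∈ P_V : vj ∈ E} y_{vj} − Σ_{i ∈ P_V∖{v,w}} Σ_{k ∉ P_V : ik ∈ E} y_{ik}`. -/
def PathIneqs (E E' : Finset (V × V)) (y y' : V × V → ℝ) : Prop :=
  ∀ v w : V, (v, w) ∈ E' → ∀ p : List V, IsPath E v w p →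
    (∑ j ∈ p.toFinset.filter (fun j => (v, j) ∈ E), y (v, j))
      - (∑ i ∈ p.toFinset \ {v, w},
          ∑ k ∈ (univ \ p.toFinset).filter (fun k => (i, k) ∈ E), y (i, k))
    ≤ y' (v, w)

/-- All lifted multicut path inequalities: for every lifted edge `vw ∈ E'` and every
`vw`-path `P` in `G`, `y'_{vw} ≥ Σ_{ij ∈ P_E} (y_{ij} − 1) + 1`. -/
def MulticutPathIneqs (E E' : Finset (V × V)) (y y' : V × V → ℝ) : Prop :=
  ∀ v w : V, (v, w) ∈ E' → ∀ p : List V, IsPath E v w p →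
    (∑ e ∈ (pEdges p).toFinset, (y e - 1)) + 1 ≤ y' (v, w)

/-- All lifted path inequalities: for every lifted edge `vw ∈ E'` and every `vw`-path `P` in
`G ∪ G'`, `y'_{vw} ≥ Σ_{j ∈ P_V : vj∈E} y_{vj} − Σ_{i ∈ P_V∖{v,w}} Σ_{k ∉ P_V : ik∈E} y_{ik}
+ Σ_{ij ∈ P_{E'}} y'_{ij} − Σ_{ij ∈ P_{E'} : ij∈E} y_{ij}`. -/
def LiftedPathIneqs (E E' : Finset (V × V)) (y y' : V × V → ℝ) : Prop :=
  ∀ v w : V, (v, w) ∈ E' → ∀ q : List (V × Bool), IsMPath E E' v w q →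
    (∑ j ∈ (mVerts v q).toFinset.filter (fun j => (v, j) ∈ E), y (v, j))
      - (∑ i ∈ (mVerts v q).toFinset \ {v, w},
          ∑ k ∈ (univ \ (mVerts v q).toFinset).filter (fun k => (i, k) ∈ E), y (i, k))
      + (∑ e ∈ mLifted v q, y' e)
      - (∑ e ∈ (mLifted v q).filter (fun e => e ∈ E), y e)
    ≤ y' (v, w)

/-- All path-induced cut inequalities: for every lifted edge `vw ∈ E'`, every node `u` with
`uw ∈ R` and `u ≠ w`, and every `vu`-path `P` in `G`,
`y'_{vw} ≤ Σ_{i ∈ P_V} Σ_{k ∉ P_V : ik∈E, kw∈R} y_{ik}`. -/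
def PathCutIneqs (E E' : Finset (V × V)) (y y' : V × V → ℝ) : Prop :=
  ∀ v w : V, (v, w) ∈ E' → ∀ u : V, Reach E u w → u ≠ w → ∀ p : List V, IsPath E v u p →
    y' (v, w) ≤
      ∑ i ∈ p.toFinset,
        ∑ k ∈ (univ \ p.toFinset).filter (fun k => (i, k) ∈ E ∧ Reach E k w), y (i, k)

/-- All lifted path-induced cut inequalities: for every lifted edge `vw ∈ E'`, every node `u`
with `uw ∈ R` and `u ≠ w`, and every `vu`-path `P` in `G ∪ G'`,
`y'_{vw} ≤ Σ_{i ∈ P_V} Σ_{k ∉ P_V : ik∈E, kw∈R} y_{ik} − Σ_{ij ∈ P_{E'}} y'_{ij}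
+ Σ_{ij ∈ P_{E'} : ij∈E} y_{ij}`. -/
def LiftedPathCutIneqs (E E' : Finset (V × V)) (y y' : V × V → ℝ) : Prop :=
  ∀ v w : V, (v, w) ∈ E' → ∀ u : V, Reach E u w → u ≠ w →
    ∀ q : List (V × Bool), IsMPath E E' v u q →
    y' (v, w) ≤
      (∑ i ∈ (mVerts v q).toFinset,
        ∑ k ∈ (univ \ (mVerts v q).toFinset).filter (fun k => (i, k) ∈ E ∧ Reach E k w),
          y (i, k))
      - (∑ e ∈ mLifted v q, y' e)
      + (∑ e ∈ (mLifted v q).filter (fun e => e ∈ E), y e)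

/-- All strengthened lifted path-induced cut inequalities: for every lifted edge `vw ∈ E'`
and every `vu`-path `P` in `G ∪ G'` with `uw ∈ E'`,
`y'_{vw} ≤ Σ_{i ∈ P_V∖{u}} Σ_{k ∉ P_V : ik∈E, kw∈R} y_{ik} − Σ_{ij ∈ P_{E'}} y'_{ij}
+ Σ_{ij ∈ P_{E'} : ij∈E} y_{ij} + y'_{uw}`. -/
def StrongLiftedPathCutIneqs (E E' : Finset (V × V)) (y y' : V × V → ℝ) : Prop :=
  ∀ v w : V, (v, w) ∈ E' → ∀ u : V, (u, w) ∈ E' →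
    ∀ q : List (V × Bool), IsMPath E E' v u q →
    y' (v, w) ≤
      (∑ i ∈ (mVerts v q).toFinset \ {u},
        ∑ k ∈ (univ \ (mVerts v q).toFinset).filter (fun k => (i, k) ∈ E ∧ Reach E k w),
          y (i, k))
      - (∑ e ∈ mLifted v q, y' e)
      + (∑ e ∈ (mLifted v q).filter (fun e => e ∈ E), y e)
      + y' (u, w)

/-- All symmetric path-induced cut inequalities: for every lifted edge `vw ∈ E'`, every node
`u` with `vu ∈ R` and `u ≠ v`, and every `uw`-path `P` in `G`,
`y'_{vw} ≤ Σ_{i ∈ P_V} Σ_{k ∉ P_V : ki∈E, vk∈R} y_{ki}`. -/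
def SymPathCutIneqs (E E' : Finset (V × V)) (y y' : V × V → ℝ) : Prop :=
  ∀ v w : V, (v, w) ∈ E' → ∀ u : V, Reach E v u → u ≠ v → ∀ p : List V, IsPath E u w p →
    y' (v, w) ≤
      ∑ i ∈ p.toFinset,
        ∑ k ∈ (univ \ p.toFinset).filter (fun k => (k, i) ∈ E ∧ Reach E v k), y (k, i)

/-- All symmetric lifted path-induced cut inequalities: for every lifted edge `vw ∈ E'`,
every node `u` with `vu ∈ R` and `u ≠ v`, and every `uw`-path `P` in `G ∪ G'`,
`y'_{vw} ≤ Σ_{i ∈ P_V} Σ_{k ∉ P_V : ki∈E, vk∈R} y_{ki} − Σ_{ij ∈ P_{E'}} y'_{ij}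
+ Σ_{ij ∈ P_{E'} : ij∈E} y_{ij}`. -/
def SymLiftedPathCutIneqs (E E' : Finset (V × V)) (y y' : V × V → ℝ) : Prop :=
  ∀ v w : V, (v, w) ∈ E' → ∀ u : V, Reach E v u → u ≠ v →
    ∀ q : List (V × Bool), IsMPath E E' u w q →
    y' (v, w) ≤
      (∑ i ∈ (mVerts u q).toFinset,
        ∑ k ∈ (univ \ (mVerts u q).toFinset).filter (fun k => (k, i) ∈ E ∧ Reach E v k),
          y (k, i))
      - (∑ e ∈ mLifted u q, y' e)
      + (∑ e ∈ (mLifted u q).filter (fun e => e ∈ E), y e)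

/-- All strengthened symmetric lifted path-induced cut inequalities: for every lifted edge
`vw ∈ E'` and every `uw`-path `P` in `G ∪ G'` with `vu ∈ E'`,
`y'_{vw} ≤ Σ_{i ∈ P_V∖{u}} Σ_{k ∉ P_V : ki∈E, vk∈R} y_{ki} − Σ_{ij ∈ P_{E'}} y'_{ij}
+ Σ_{ij ∈ P_{E'} : ij∈E} y_{ij} + y'_{vu}`. -/
def StrongSymLiftedPathCutIneqs (E E' : Finset (V × V)) (y y' : V × V → ℝ) : Prop :=
  ∀ v w : V, (v, w) ∈ E' → ∀ u : V, (v, u) ∈ E' →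
    ∀ q : List (V × Bool), IsMPath E E' u w q →
    y' (v, w) ≤
      (∑ i ∈ (mVerts u q).toFinset \ {u},
        ∑ k ∈ (univ \ (mVerts u q).toFinset).filter (fun k => (k, i) ∈ E ∧ Reach E v k),
          y (k, i))
      - (∑ e ∈ mLifted u q, y' e)
      + (∑ e ∈ (mLifted u q).filter (fun e => e ∈ E), y e)
      + y' (v, u)

/-- The two single node cut inequalities for every lifted edge `vw ∈ E'`:
`y'_{vw} ≤ Σ_{u : vu∈E, uw∈R} y_{vu}` and `y'_{vw} ≤ Σ_{u : uw∈E, vu∈R} y_{uw}`. -/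
def SingleNodeCutIneqs (E E' : Finset (V × V)) (y y' : V × V → ℝ) : Prop :=
  ∀ v w : V, (v, w) ∈ E' →
    (y' (v, w) ≤ ∑ u ∈ univ.filter (fun u => (v, u) ∈ E ∧ Reach E u w), y (v, u)) ∧
    (y' (v, w) ≤ ∑ u ∈ univ.filter (fun u => (u, w) ∈ E ∧ Reach E v u), y (u, w))

/-- A feasible integral solution `(x,y,y')` of the lifted disjoint paths problem:
`x,y,y'` are binary, flow conservation holds at every node other than `s` and `t`, and a
lifted edge is active iff there is an active path in `G` between its endpoints. -/
def FeasibleIntegral (E E' : Finset (V × V)) (s t : V)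
    (x : V → ℝ) (y y' : V × V → ℝ) : Prop :=
  (∀ v : V, x v = 0 ∨ x v = 1) ∧
  (∀ e ∈ E, y e = 0 ∨ y e = 1) ∧
  (∀ e ∈ E', y' e = 0 ∨ y' e = 1) ∧
  (∀ v : V, v ≠ s → v ≠ t →
    (∑ u ∈ univ.filter (fun u => (u, v) ∈ E), y (u, v)) = x v ∧
    (∑ w ∈ univ.filter (fun w => (v, w) ∈ E), y (v, w)) = x v) ∧
  (∀ v w : V, (v, w) ∈ E' →
    (y' (v, w) = 1 ↔ ∃ p : List V, IsPath E v w p ∧ ∀ e ∈ pEdges p, y e = 1))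

end LiftedDisjointPaths


namespace Cex

def E0 : Finset (Fin 5 × Fin 5) := {(0,1),(1,2),(1,3),(2,3),(3,4)}

lemma E0_lt : ∀ e ∈ E0, e.1 < e.2 := by decide

lemma chain_le {p : List (Fin 5)} (hc : p.Chain' (fun a b => (a, b) ∈ E0))
    {a b : Fin 5} (ha : p.head? = some a) (hb : p.getLast? = some b) : a ≤ b := by
  have hc' : p.Chain' (· < ·) := hc.imp (fun x y h => E0_lt _ h)
  have hp : p.Pairwise (· < ·) := List.isChain_iff_pairwise.mp hc'
  cases p with
  | nil => simp at ha
  | cons x xs =>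
    simp at ha; subst ha
    have hbmem : b ∈ x :: xs := List.mem_of_getLast? hb
    rcases List.mem_cons.mp hbmem with h | h
    · exact le_of_eq h.symm
    · exact le_of_lt ((List.pairwise_cons.mp hp).1 b h)

lemma reach_le {v w : Fin 5} (h : Reach E0 v w) : v ≤ w := by
  rcases h with h | ⟨p, hne, hh, hl, hc⟩
  · exact le_of_eq h
  · exact chain_le hc hh hl

lemma flow : IsFlowNetwork E0 0 4 := by
  refine ⟨?_, ?_, ?_⟩
  · intro v w hvw hr
    exact absurd (reach_le hr) (not_le.mpr (E0_lt _ hvw))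
  · intro v
    fin_cases v
    · exact Or.inl rfl
    · exact Or.inr ⟨[0,1], by decide, by decide, by decide, by simp [E0, List.Chain', List.isChain_cons_cons]⟩
    · exact Or.inr ⟨[0,1,2], by decide, by decide, by decide, by simp [E0, List.Chain', List.isChain_cons_cons]⟩
    · exact Or.inr ⟨[0,1,3], by decide, by decide, by decide, by simp [E0, List.Chain', List.isChain_cons_cons]⟩
    · exact Or.inr ⟨[0,1,3,4], by decide, by decide, by decide, by simp [E0, List.Chain', List.isChain_cons_cons]⟩
  · intro v
    fin_cases v
    · exact Or.inr ⟨[0,1,3,4], by decide, by decide, by decide, by simp [E0, List.Chain', List.isChain_cons_cons]⟩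
    · exact Or.inr ⟨[1,3,4], by decide, by decide, by decide, by simp [E0, List.Chain', List.isChain_cons_cons]⟩
    · exact Or.inr ⟨[2,3,4], by decide, by decide, by decide, by simp [E0, List.Chain', List.isChain_cons_cons]⟩
    · exact Or.inr ⟨[3,4], by decide, by decide, by decide, by simp [E0, List.Chain', List.isChain_cons_cons]⟩
    · exact Or.inl rfl

end Cex

/-- There exist a flow network, a lifted graph and
`(y,y') ∈ [0,1]^E × [0,1]^{E'}` satisfying all lifted multicut path inequalities but violating
some path inequality. -/
theorem multicut_path_ineqs_strictly_weaker :
    ∃ (n : ℕ) (E E' : Finset (Fin n × Fin n)) (s t : Fin n)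
      (y y' : Fin n × Fin n → ℝ),
      IsFlowNetwork E s t ∧ IsLiftedGraph E' s t ∧ InUnitBox E y ∧ InUnitBox E' y' ∧
      MulticutPathIneqs E E' y y' ∧ ¬ PathIneqs E E' y y' := by
  refine ⟨5, Cex.E0, {(1,3)}, 0, 4, fun _ => 1/2, fun _ => 1/2,
    Cex.flow, ?_, fun e _ => by norm_num, fun e _ => by norm_num, ?_, ?_⟩
  · intro e he
    have : e = ((1 : Fin 5), (3 : Fin 5)) := by simpa using he
    subst this
    refine ⟨by decide, by decide, by decide, by decide⟩
  · intro v w hvw p hp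
    obtain ⟨hne, hh, hl, hc⟩ := hp
    have hvne : v ≠ w := by
      have hv : v = 1 ∧ w = 3 := by simpa [Prod.ext_iff] using hvw
      rw [hv.1, hv.2]; decide
    -- p has at least two elements
    have hcard : 1 ≤ (pEdges p).toFinset.card := by
      rcases p with _ | ⟨a, _ | ⟨b, rest⟩⟩
      · exact absurd rfl hne
      · exfalso; apply hvne; simp at hh hl; rw [← hh, ← hl]
      · refine Finset.card_pos.mpr ⟨(a, b), ?_⟩
        simp [pEdges]
    have hsum : (∑ e ∈ (pEdges p).toFinset, ((1:ℝ)/2 - 1))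
        = (pEdges p).toFinset.card * (-(1/2)) := by
      rw [Finset.sum_const, nsmul_eq_mul]; ring
    rw [hsum]
    have : (1:ℝ) ≤ (pEdges p).toFinset.card := by exact_mod_cast hcard
    nlinarith
  · intro hP
    have h := hP 1 3 (by decide) [1,2,3] ⟨by decide, by decide, by decide, by simp [Cex.E0, List.Chain', List.isChain_cons_cons]⟩
    have h1 : ([1,2,3] : List (Fin 5)).toFinset = {1,2,3} := by decide
    rw [h1] at h
    have h2 : ({1,2,3} : Finset (Fin 5)).filter (fun j => ((1:Fin 5), j) ∈ Cex.E0)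
        = {2,3} := by decide
    have h3 : ({1,2,3} : Finset (Fin 5)) \ {1,3} = {2} := by decide
    have h4 : (univ \ ({1,2,3} : Finset (Fin 5))).filter
        (fun k => ((2:Fin 5), k) ∈ Cex.E0) = ∅ := by decide
    rw [h2, h3] at h
    simp only [Finset.sum_singleton] at h
    rw [h4] at h
    simp at h
    norm_num at h
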